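/- arXiv:2411.03947 — 10 statements merged into one kernel-verified Lean document; each statement's English description precedes it below -/
import Mathlib

section
/- Let S and T be semigroups such that for all R-incomparable elements u, v ∈ T there exist elements a, b ∈ S and a semigroup homomorphism φ : S → T such that φ(a) = u, φ(b) = v and φ(aS ∩ bS) = uT ∩ vT. If S is right ideal Howson, then so is T. -/
/-- `XS¹ = X ∪ XS` for a subset `X` of a semigroup `S`. -/
def RS1 {S : Type*} [Semigroup S] (X : Set S) : Set S :=
  X ∪ {y | ∃ x ∈ X, ∃ s : S, y = x * s}

/-- A finitely generated right ideal: a set of the form `XS¹` with `X` finite. -/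
def FGRightIdeal {S : Type*} [Semigroup S] (I : Set S) : Prop :=
  ∃ X : Finset S, I = RS1 (↑X : Set S)

/-- A semigroup is right ideal Howson if the intersection of any two finitely
generated right ideals is finitely generated. -/
def RIH (S : Type*) [Semigroup S] : Prop :=
  ∀ I J : Set S, FGRightIdeal I → FGRightIdeal J → FGRightIdeal (I ∩ J)

lemma mem_RS1 {S : Type*} [Semigroup S] {X : Set S} {z : S} :
    z ∈ RS1 X ↔ z ∈ X ∨ ∃ x ∈ X, ∃ s : S, z = x * s := Iff.rfl

lemma mem_RS1_singleton {S : Type*} [Semigroup S] {u z : S} :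
    z ∈ RS1 ({u} : Set S) ↔ z = u ∨ ∃ s : S, z = u * s := by
  rw [mem_RS1]
  simp [Set.mem_singleton_iff]

lemma RS1_union {S : Type*} [Semigroup S] (X Y : Set S) :
    RS1 (X ∪ Y) = RS1 X ∪ RS1 Y := by
  ext z
  simp only [Set.mem_union, mem_RS1, Set.mem_union]
  constructor
  · rintro ((hz | hz) | ⟨x, hx | hx, s, rfl⟩)
    · exact Or.inl (Or.inl hz)
    · exact Or.inr (Or.inl hz)
    · exact Or.inl (Or.inr ⟨x, hx, s, rfl⟩)
    · exact Or.inr (Or.inr ⟨x, hx, s, rfl⟩)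
  · rintro ((hz | ⟨x, hx, s, rfl⟩) | (hz | ⟨x, hx, s, rfl⟩))
    · exact Or.inl (Or.inl hz)
    · exact Or.inr ⟨x, Or.inl hx, s, rfl⟩
    · exact Or.inl (Or.inr hz)
    · exact Or.inr ⟨x, Or.inr hx, s, rfl⟩

lemma FG_union {S : Type*} [Semigroup S] {I J : Set S}
    (hI : FGRightIdeal I) (hJ : FGRightIdeal J) : FGRightIdeal (I ∪ J) := by
  classical
  obtain ⟨X, rfl⟩ := hI; obtain ⟨Y, rfl⟩ := hJ
  exact ⟨X ∪ Y, by rw [Finset.coe_union, RS1_union]⟩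

lemma RS1_biUnion {S : Type*} [Semigroup S] (A : Finset S) :
    RS1 (↑A : Set S) = ⋃ a ∈ A, RS1 {a} := by
  ext z
  constructor
  · rintro (hz | ⟨x, hx, s, rfl⟩)
    · exact Set.mem_biUnion hz (Or.inl rfl)
    · exact Set.mem_biUnion hx (Or.inr ⟨x, rfl, s, rfl⟩)
  · intro hz
    obtain ⟨a, ha, hmem⟩ := Set.mem_iUnion₂.mp hz
    rcases hmem with hz' | ⟨x, hx, s, rfl⟩
    · rw [Set.eq_of_mem_singleton hz']
      exact Or.inl ha
    · rw [Set.eq_of_mem_singleton hx]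
      exact Or.inr ⟨a, ha, s, rfl⟩

lemma FG_biUnion {S : Type*} [Semigroup S] {α : Type*} (A : Finset α)
    (f : α → Set S) (hf : ∀ a ∈ A, FGRightIdeal (f a)) :
    FGRightIdeal (⋃ a ∈ A, f a) := by
  classical
  induction A using Finset.induction_on with
  | empty => exact ⟨∅, by simp [RS1]⟩
  | insert _ _ ha ih =>
    rw [Finset.set_biUnion_insert]
    exact FG_union (hf _ (Finset.mem_insert_self _ _))
      (ih fun b hb => hf b (Finset.mem_insert_of_mem hb))

theorem stmt0 {S T : Type*} [Semigroup S] [Semigroup T]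
    (h : ∀ u v : T,
      u ∉ ({v} ∪ {y | ∃ t : T, y = v * t} : Set T) →
      v ∉ ({u} ∪ {y | ∃ t : T, y = u * t} : Set T) →
      ∃ (a b : S) (φ : S →ₙ* T), φ a = u ∧ φ b = v ∧
        φ '' ({y | ∃ s : S, y = a * s} ∩ {y | ∃ s : S, y = b * s}) =
          {y | ∃ t : T, y = u * t} ∩ {y | ∃ t : T, y = v * t})
    (hS : RIH S) : RIH T := by
  classical
  -- principal case
  have key : ∀ u v : T, FGRightIdeal (RS1 {u} ∩ RS1 {v}) := by
    intro u v
    by_cases huv : u ∈ ({v} ∪ {y | ∃ t : T, y = v * t} : Set T)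
    · -- uT¹ ⊆ vT¹
      have hsub : RS1 ({u} : Set T) ⊆ RS1 {v} := by
        intro z hz
        rw [mem_RS1_singleton] at hz ⊢
        rcases huv with rfl | ⟨t, rfl⟩
        · exact hz
        · rcases hz with rfl | ⟨s, rfl⟩
          · exact Or.inr ⟨t, rfl⟩
          · exact Or.inr ⟨t * s, mul_assoc v t s⟩
      exact ⟨{u}, by rw [Set.inter_eq_left.mpr hsub, Finset.coe_singleton]⟩
    · by_cases hvu : v ∈ ({u} ∪ {y | ∃ t : T, y = u * t} : Set T)
      · have hsub : RS1 ({v} : Set T) ⊆ RS1 {u} := by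
          intro z hz
          rw [mem_RS1_singleton] at hz ⊢
          rcases hvu with rfl | ⟨t, rfl⟩
          · exact hz
          · rcases hz with rfl | ⟨s, rfl⟩
            · exact Or.inr ⟨t, rfl⟩
            · exact Or.inr ⟨t * s, mul_assoc u t s⟩
        exact ⟨{v}, by rw [Set.inter_eq_right.mpr hsub, Finset.coe_singleton]⟩
      · -- incomparable
        obtain ⟨a, b, φ, hfa, hfb, himg⟩ := h u v huv hvu
        have hne : a ≠ b := by
          intro e
          exact huv (Or.inl (by rw [← hfa, e, hfb]; rfl))
        have hne' : ∀ s : S, a ≠ b * s := by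
          intro s hs
          exact huv (Or.inr ⟨φ s, by rw [← hfa, hs, map_mul, hfb]⟩)
        have hne'' : ∀ s : S, b ≠ a * s := by
          intro s hs
          exact hvu (Or.inr ⟨φ s, by rw [← hfb, hs, map_mul, hfa]⟩)
        have hab : RS1 ({a} : Set S) ∩ RS1 {b}
            = {y | ∃ s : S, y = a * s} ∩ {y | ∃ s : S, y = b * s} := by
          ext z
          rw [Set.mem_inter_iff, mem_RS1_singleton, mem_RS1_singleton]
          constructor
          · rintro ⟨rfl | h1, h2⟩
            · rcases h2 with e | ⟨s, hs⟩
              · exact absurd e hne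
              · exact absurd hs (hne' s)
            · rcases h2 with rfl | h2
              · rcases h1 with ⟨s, hs⟩
                exact absurd hs (hne'' s)
              · exact ⟨h1, h2⟩
          · rintro ⟨h1, h2⟩
            exact ⟨Or.inr h1, Or.inr h2⟩
        obtain ⟨X, hX⟩ := hS (RS1 {a}) (RS1 {b})
          ⟨{a}, by rw [Finset.coe_singleton]⟩ ⟨{b}, by rw [Finset.coe_singleton]⟩
        rw [hab] at hX
        have huvT : RS1 ({u} : Set T) ∩ RS1 {v}
            = {y | ∃ t : T, y = u * t} ∩ {y | ∃ t : T, y = v * t} := by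
          ext z
          rw [Set.mem_inter_iff, mem_RS1_singleton, mem_RS1_singleton]
          constructor
          · rintro ⟨rfl | h1, h2⟩
            · rcases h2 with e | ⟨s, hs⟩
              · exact absurd (Or.inl e) huv
              · exact absurd (Or.inr ⟨s, hs⟩) huv
            · rcases h2 with rfl | h2
              · exact absurd (Or.inr h1) hvu
              · exact ⟨h1, h2⟩
          · rintro ⟨h1, h2⟩
            exact ⟨Or.inr h1, Or.inr h2⟩
        rw [huvT, ← himg, hX]
        refine ⟨X.image φ, ?_⟩
        have hXmem : ∀ x ∈ X, φ x ∈ φ '' RS1 (↑X : Set S) :=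
          fun x hx => ⟨x, Or.inl (Finset.mem_coe.mpr hx), rfl⟩
        have hideal : ∀ w ∈ φ '' RS1 (↑X : Set S), ∀ t : T,
            w * t ∈ φ '' RS1 (↑X : Set S) := by
          intro w hw t
          rw [← hX, himg] at hw ⊢
          obtain ⟨⟨r, rfl⟩, ⟨r', hr'⟩⟩ := hw
          exact ⟨⟨r * t, mul_assoc u r t⟩, ⟨r' * t, by rw [hr', mul_assoc]⟩⟩
        ext z
        rw [mem_RS1]
        constructor
        · rintro ⟨x, hx | ⟨x', hx', s, rfl⟩, rfl⟩
          · exact Or.inl (Finset.mem_coe.mpr (Finset.mem_image_of_mem φ hx))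
          · exact Or.inr ⟨φ x', Finset.mem_coe.mpr (Finset.mem_image_of_mem φ hx'), φ s,
              map_mul φ x' s⟩
        · rintro (hz | ⟨w, hw, t, rfl⟩)
          · obtain ⟨x, hx, rfl⟩ := Finset.mem_image.mp (Finset.mem_coe.mp hz)
            exact hXmem x hx
          · obtain ⟨x, hx, rfl⟩ := Finset.mem_image.mp (Finset.mem_coe.mp hw)
            exact hideal _ (hXmem x hx) t
  intro I J hI hJ
  obtain ⟨A, rfl⟩ := hI; obtain ⟨B, rfl⟩ := hJ
  have hdecomp : RS1 (↑A : Set T) ∩ RS1 ↑B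
      = ⋃ a ∈ A, ⋃ b ∈ B, (RS1 {a} ∩ RS1 {b}) := by
    rw [RS1_biUnion A, RS1_biUnion B]
    ext z
    simp only [Set.mem_inter_iff, Set.mem_iUnion]
    tauto
  rw [hdecomp]
  exact FG_biUnion A _ fun a _ => FG_biUnion B _ fun b _ => key a b
end

section
/- Let S be a semigroup and let I be a two-sided ideal of S. Then the Rees quotient S/I (the quotient of S by the congruence ρ_I defined by (a,b) ∈ ρ_I iff a = b or both a ∈ I and b ∈ I) is right ideal Howson whenever S is right ideal Howson. -/
lemma subset_RS1 {S : Type*} [Semigroup S] (W : Set S) : W ⊆ RS1 W :=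
  fun _ h => Or.inl h

lemma RS1_mono {S : Type*} [Semigroup S] {W W' : Set S} (h : W ⊆ W') :
    RS1 W ⊆ RS1 W' := by
  rintro a (ha | ⟨x, hx, s, rfl⟩)
  · exact Or.inl (h ha)
  · exact Or.inr ⟨x, h hx, s, rfl⟩

lemma RS1_right {S : Type*} [Semigroup S] {W : Set S} {a : S} (ha : a ∈ RS1 W)
    (s : S) : a * s ∈ RS1 W := by
  rcases ha with h | ⟨x, hx, t, rfl⟩
  · exact Or.inr ⟨a, h, s, rfl⟩
  · exact Or.inr ⟨x, hx, t * s, by rw [mul_assoc]⟩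

lemma RS1_image {S T : Type*} [Semigroup S] [Semigroup T] (f : S → T)
    (hmul : ∀ a b : S, f (a * b) = f a * f b) (hsurj : Function.Surjective f)
    (W : Set S) : f '' RS1 W = RS1 (f '' W) := by
  ext q
  constructor
  · rintro ⟨a, (ha | ⟨x, hx, s, rfl⟩), rfl⟩
    · exact Or.inl ⟨a, ha, rfl⟩
    · exact Or.inr ⟨f x, ⟨x, hx, rfl⟩, f s, hmul x s⟩
  · rintro (⟨a, ha, rfl⟩ | ⟨_, ⟨x, hx, rfl⟩, t, rfl⟩)
    · exact ⟨a, Or.inl ha, rfl⟩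
    · obtain ⟨s, rfl⟩ := hsurj t
      exact ⟨x * s, Or.inr ⟨x, hx, s, rfl⟩, hmul x s⟩

theorem stmt1 {S : Type*} [Semigroup S] (I : Set S) (hne : I.Nonempty)
    (hl : ∀ s : S, ∀ a ∈ I, s * a ∈ I) (hr : ∀ a ∈ I, ∀ s : S, a * s ∈ I)
    (c : Con S) (hc : ∀ a b : S, c a b ↔ a = b ∨ (a ∈ I ∧ b ∈ I))
    (hS : RIH S) : RIH c.Quotient := by
  classical
  rintro A B ⟨Xb, rfl⟩ ⟨Yb, rfl⟩
  set π : S → c.Quotient := fun s => (s : c.Quotient) with hπ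
  have hsurj : Function.Surjective π := fun q => Quotient.inductionOn q fun s => ⟨s, rfl⟩
  have hmul : ∀ a b : S, π (a * b) = π a * π b := fun a b => rfl
  set g : c.Quotient → S := Function.surjInv hsurj with hg
  have hπg : ∀ q, π (g q) = q := fun q => Function.surjInv_eq hsurj q
  have himg : ∀ (W : Finset c.Quotient), π '' (↑(W.image g) : Set S) = (↑W : Set c.Quotient) := by
    intro W
    rw [Finset.coe_image, ← Set.image_comp]
    have : π ∘ g = id := funext hπg
    rw [this, Set.image_id]
  set X : Finset S := Xb.image g
  set Y : Finset S := Yb.image g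
  have hXim : π '' (↑X : Set S) = (↑Xb : Set c.Quotient) := himg Xb
  have hYim : π '' (↑Y : Set S) = (↑Yb : Set c.Quotient) := himg Yb
  obtain ⟨Z, hZ⟩ := hS (RS1 ↑X) (RS1 ↑Y) ⟨X, rfl⟩ ⟨Y, rfl⟩
  obtain ⟨i0, hi0⟩ := hne
  set e : c.Quotient := π i0 with he_def
  have heI : ∀ a ∈ I, π a = e := fun a ha =>
    (Con.eq c).mpr ((hc a i0).mpr (Or.inr ⟨ha, hi0⟩))
  have he_mul : ∀ q : c.Quotient, e * q = e := by
    intro q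
    obtain ⟨s, rfl⟩ := hsurj q
    show π i0 * π s = e
    rw [← hmul]
    exact heI _ (hr i0 hi0 s)
  have hAeq : π '' RS1 (↑X : Set S) = RS1 (↑Xb : Set c.Quotient) := by
    rw [RS1_image π hmul hsurj, hXim]
  have hBeq : π '' RS1 (↑Y : Set S) = RS1 (↑Yb : Set c.Quotient) := by
    rw [RS1_image π hmul hsurj, hYim]
  have hmain : ∀ q ∈ RS1 (↑Xb : Set c.Quotient) ∩ RS1 (↑Yb : Set c.Quotient),
      q ≠ e → q ∈ RS1 (π '' (↑Z : Set S)) := by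
    rintro q ⟨hqA, hqB⟩ hqe
    rw [← hAeq] at hqA
    rw [← hBeq] at hqB
    obtain ⟨a, haX, rfl⟩ := hqA
    obtain ⟨b, hbY, hab⟩ := hqB
    have hba : b = a := by
      rcases (hc b a).mp ((Con.eq c).mp hab) with h | ⟨hbI, haI⟩
      · exact h
      · exact absurd (heI a haI) hqe
    subst hba
    have : b ∈ RS1 (↑Z : Set S) := hZ ▸ ⟨haX, hbY⟩
    rw [← RS1_image π hmul hsurj]
    exact ⟨b, this, rfl⟩
  have hsub : RS1 (π '' (↑Z : Set S)) ⊆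
      RS1 (↑Xb : Set c.Quotient) ∩ RS1 (↑Yb : Set c.Quotient) := by
    rw [← RS1_image π hmul hsurj, ← hZ]
    rintro q ⟨a, ⟨haX, haY⟩, rfl⟩
    exact ⟨hAeq ▸ ⟨a, haX, rfl⟩, hBeq ▸ ⟨a, haY, rfl⟩⟩
  by_cases he : e ∈ RS1 (↑Xb : Set c.Quotient) ∩ RS1 (↑Yb : Set c.Quotient)
  · refine ⟨Z.image π ∪ {e}, ?_⟩
    have hcoe : (↑(Z.image π ∪ {e}) : Set c.Quotient) = π '' (↑Z : Set S) ∪ {e} := by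
      rw [Finset.coe_union, Finset.coe_image, Finset.coe_singleton]
    rw [hcoe]
    ext q
    constructor
    · intro hq
      by_cases hqe : q = e
      · exact Or.inl (Or.inr hqe)
      · exact RS1_mono Set.subset_union_left (hmain q hq hqe)
    · rintro ((hq | hq) | ⟨x, (hx | hx), s, rfl⟩)
      · exact hsub (subset_RS1 _ hq)
      · exact hq ▸ he
      · exact hsub (RS1_right (subset_RS1 _ hx) s)
      · rw [hx, he_mul]; exact he
  · refine ⟨Z.image π, ?_⟩
    rw [Finset.coe_image]
    ext q
    constructor
    · intro hq
      have hqe : q ≠ e := fun h => he (h ▸ hq)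
      exact hmain q hq hqe
    · exact fun hq => hsub hq
end

section
/- If T is a retract of a semigroup S (i.e., T is a subsemigroup of S and there is a semigroup homomorphism φ : S → T with φ(t) = t for all t ∈ T), and S is right ideal Howson, then T is right ideal Howson. -/
lemma RS1_mul {S : Type*} [Semigroup S] {X : Set S} {a : S} (h : a ∈ RS1 X) (s : S) :
    a * s ∈ RS1 X := by
  rcases h with h | ⟨x, hx, t, rfl⟩
  · exact Or.inr ⟨a, h, s, rfl⟩
  · exact Or.inr ⟨x, hx, t * s, mul_assoc _ _ _⟩

theorem stmt2 {S : Type*} [Semigroup S] (T : Subsemigroup S)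
    (φ : S →ₙ* ↥T) (hφ : ∀ t : ↥T, φ (t : S) = t)
    (hS : RIH S) : RIH ↥T := by
  classical
  rintro I J ⟨X, rfl⟩ ⟨Y, rfl⟩
  obtain ⟨Z, hZ⟩ := hS (RS1 ((X.image (fun x : ↥T => (x : S)) : Finset S) : Set S))
      (RS1 ((Y.image (fun x : ↥T => (x : S)) : Finset S) : Set S)) ⟨_, rfl⟩ ⟨_, rfl⟩
  refine ⟨Z.image φ, ?_⟩
  have key : ∀ (W : Finset ↥T) (t : ↥T), t ∈ RS1 (↑W : Set ↥T) →
      (t : S) ∈ RS1 ((W.image (fun x : ↥T => (x : S)) : Finset S) : Set S) := by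
    intro W t ht
    rcases ht with h | ⟨x, hx, s, rfl⟩
    · exact Or.inl (by simpa using Finset.mem_image_of_mem (fun x : ↥T => (x : S)) (Finset.mem_coe.mp h))
    · exact Or.inr ⟨(x : S), by
        simpa using Finset.mem_image_of_mem (fun x : ↥T => (x : S)) (Finset.mem_coe.mp hx),
        (s : S), rfl⟩
  have key2 : ∀ (W : Finset ↥T) (z : S),
      z ∈ RS1 ((W.image (fun x : ↥T => (x : S)) : Finset S) : Set S) →
      φ z ∈ RS1 (↑W : Set ↥T) := by
    intro W z hz
    rcases hz with h | ⟨x, hx, s, rfl⟩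
    · simp only [Finset.coe_image, Set.mem_image, Finset.mem_coe] at h
      obtain ⟨x, hx, rfl⟩ := h
      exact Or.inl (by simpa [hφ x] using (Finset.mem_coe.mpr hx))
    · simp only [Finset.coe_image, Set.mem_image, Finset.mem_coe] at hx
      obtain ⟨x, hx, rfl⟩ := hx
      exact Or.inr ⟨x, hx, φ s, by rw [map_mul, hφ x]⟩
  ext t
  constructor
  · rintro ⟨h1, h2⟩
    have hz : (t : S) ∈ RS1 (↑Z : Set S) := by
      rw [← hZ]; exact ⟨key X t h1, key Y t h2⟩
    rcases hz with h | ⟨z, hzZ, s, hts⟩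
    · refine Or.inl ?_
      simp only [Finset.coe_image, Set.mem_image, Finset.mem_coe]
      exact ⟨(t : S), Finset.mem_coe.mp h, hφ t⟩
    · refine Or.inr ⟨φ z, ?_, φ s, ?_⟩
      · simp only [Finset.coe_image, Set.mem_image, Finset.mem_coe]
        exact ⟨z, hzZ, rfl⟩
      · rw [← hφ t, hts, map_mul]
  · rintro (h | ⟨x, hx, s, rfl⟩)
    · simp only [Finset.coe_image, Set.mem_image, Finset.mem_coe] at h
      obtain ⟨z, hzZ, rfl⟩ := h
      have hz : z ∈ RS1 (↑Z : Set S) := Or.inl (Finset.mem_coe.mpr hzZ)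
      rw [← hZ] at hz
      exact ⟨key2 X z hz.1, key2 Y z hz.2⟩
    · simp only [Finset.coe_image, Set.mem_image, Finset.mem_coe] at hx
      obtain ⟨z, hzZ, rfl⟩ := hx
      have hz : z ∈ RS1 (↑Z : Set S) := Or.inl (Finset.mem_coe.mpr hzZ)
      rw [← hZ] at hz
      exact ⟨RS1_mul (key2 X z hz.1) s, RS1_mul (key2 Y z hz.2) s⟩
end

section
/- Let S be a semigroup and T a subsemigroup of S such that the complement S \ T is a two-sided ideal of S. If S is right ideal Howson, then T is right ideal Howson. -/
lemma key {S : Type*} [Semigroup S] (T : Subsemigroup S)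
    (hl : ∀ s : S, ∀ a ∈ (↑T : Set S)ᶜ, s * a ∈ (↑T : Set S)ᶜ)
    (hr : ∀ a ∈ (↑T : Set S)ᶜ, ∀ s : S, a * s ∈ (↑T : Set S)ᶜ)
    (Z : Finset S) (t : ↥T) :
    (↑t : S) ∈ RS1 (↑Z : Set S) ↔
      t ∈ RS1 (↑(Z.preimage (Subtype.val : ↥T → S) Subtype.val_injective.injOn) : Set ↥T) := by
  simp only [RS1, Set.mem_union, Set.mem_setOf_eq, Finset.coe_preimage,
    Set.mem_preimage, Finset.mem_coe]
  constructor
  · rintro (h | ⟨z, hz, s, hts⟩)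
    · exact Or.inl h
    · have hzT : z ∈ T := by
        by_contra hzn
        exact hr z hzn s (hts ▸ t.2)
      have hsT : s ∈ T := by
        by_contra hsn
        exact hl z s hsn (hts ▸ t.2)
      exact Or.inr ⟨⟨z, hzT⟩, hz, ⟨s, hsT⟩, Subtype.ext hts⟩
  · rintro (h | ⟨z, hz, s, hts⟩)
    · exact Or.inl h
    · exact Or.inr ⟨↑z, hz, ↑s, congrArg Subtype.val hts⟩

theorem stmt3 {S : Type*} [Semigroup S] (T : Subsemigroup S)
    (hne : ((↑T : Set S)ᶜ).Nonempty)
    (hl : ∀ s : S, ∀ a ∈ (↑T : Set S)ᶜ, s * a ∈ (↑T : Set S)ᶜ)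
    (hr : ∀ a ∈ (↑T : Set S)ᶜ, ∀ s : S, a * s ∈ (↑T : Set S)ᶜ)
    (hS : RIH S) : RIH ↥T := by
  classical
  intro I J hI hJ
  obtain ⟨X, rfl⟩ := hI
  obtain ⟨Y, rfl⟩ := hJ
  obtain ⟨Z, hZ⟩ := hS (RS1 (↑(X.image Subtype.val) : Set S))
    (RS1 (↑(Y.image Subtype.val) : Set S)) ⟨_, rfl⟩ ⟨_, rfl⟩
  refine ⟨Z.preimage Subtype.val Subtype.val_injective.injOn, ?_⟩
  have hXp : (X.image Subtype.val).preimage Subtype.val Subtype.val_injective.injOn = X := by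
    ext x; simp [Finset.mem_preimage]
  have hYp : (Y.image Subtype.val).preimage Subtype.val Subtype.val_injective.injOn = Y := by
    ext x; simp [Finset.mem_preimage]
  ext t
  have hX := key T hl hr (X.image Subtype.val) t
  have hY := key T hl hr (Y.image Subtype.val) t
  have hZ' := key T hl hr Z t
  rw [hXp] at hX
  rw [hYp] at hY
  constructor
  · rintro ⟨h1, h2⟩
    have : (↑t : S) ∈ RS1 (↑Z : Set S) := by
      rw [← hZ]; exact ⟨hX.mpr h1, hY.mpr h2⟩
    exact hZ'.mp this
  · intro h
    have := hZ'.mpr h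
    rw [← hZ] at this
    exact ⟨hX.mp this.1, hY.mp this.2⟩
end

section
/- Let S be a semigroup. If there exists a right factorisable element a ∈ S (i.e., a ∈ aS) such that the right annihilator congruence r_S(a) is finitely generated as a right congruence, then S = US¹ for some finite set U ⊆ S. -/
/-- The right annihilator congruence `r_S(a) = {(s,t) : a*s = a*t}`. -/
def rAnn {S : Type*} [Semigroup S] (a : S) : S → S → Prop :=
  fun s t => a * s = a * t

/-- A right congruence on a semigroup: an equivalence relation compatible with
right multiplication. -/
def IsRightCong {S : Type*} [Semigroup S] (ρ : S → S → Prop) : Prop :=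
  Equivalence ρ ∧ ∀ a b s : S, ρ a b → ρ (a * s) (b * s)

/-- The smallest right congruence containing the relation `X`. -/
def rcGen {S : Type*} [Semigroup S] (X : S → S → Prop) : S → S → Prop :=
  fun a b => ∀ ρ : S → S → Prop, IsRightCong ρ → (∀ x y, X x y → ρ x y) → ρ a b

/-- A right congruence is finitely generated if it is generated by a finite
set of pairs. -/
def FGRightCong {S : Type*} [Semigroup S] (ρ : S → S → Prop) : Prop :=
  ∃ X : Finset (S × S), ρ = rcGen (fun a b => (a, b) ∈ X)

/-- A semigroup is finitely right equated if every right annihilator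
congruence is finitely generated. -/
def FRE (S : Type*) [Semigroup S] : Prop :=
  ∀ a : S, FGRightCong (rAnn a)

theorem stmt11 {S : Type*} [Semigroup S] (a : S) (ha : ∃ s : S, a = a * s)
    (hfg : FGRightCong (rAnn a)) :
    ∃ U : Finset S, RS1 (↑U : Set S) = Set.univ := by
  classical
  obtain ⟨b, hb⟩ := ha
  obtain ⟨X, hX⟩ := hfg
  refine ⟨{b} ∪ X.image Prod.fst ∪ X.image Prod.snd, ?_⟩
  set U : Finset S := {b} ∪ X.image Prod.fst ∪ X.image Prod.snd with hU
  have hclosed : ∀ s u : S, s ∈ RS1 (↑U : Set S) → s * u ∈ RS1 (↑U : Set S) := by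
    rintro s u (hs | ⟨x, hx, v, rfl⟩)
    · exact Or.inr ⟨s, hs, u, rfl⟩
    · exact Or.inr ⟨x, hx, v * u, mul_assoc x v u⟩
  ext t
  simp only [Set.mem_univ, iff_true]
  have key : rcGen (fun s t => (s, t) ∈ X) t (b * t) := by
    rw [← hX]
    show a * t = a * (b * t)
    rw [← mul_assoc, ← hb]
  set ρ : S → S → Prop := fun s t => s = t ∨ (s ∈ RS1 (↑U : Set S) ∧ t ∈ RS1 (↑U : Set S)) with hρ
  have hcong : IsRightCong ρ := by
    constructor
    · constructor
      · intro x; exact Or.inl rfl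
      · rintro x y (rfl | ⟨h1, h2⟩); exacts [Or.inl rfl, Or.inr ⟨h2, h1⟩]
      · rintro x y z (rfl | ⟨h1, h2⟩) h
        · exact h
        · rcases h with rfl | ⟨h3, h4⟩
          · exact Or.inr ⟨h1, h2⟩
          · exact Or.inr ⟨h1, h4⟩
    · rintro x y s (rfl | ⟨h1, h2⟩)
      · exact Or.inl rfl
      · exact Or.inr ⟨hclosed x s h1, hclosed y s h2⟩
  have hXρ : ∀ x y : S, (x, y) ∈ X → ρ x y := by
    intro x y hxy
    refine Or.inr ⟨Or.inl ?_, Or.inl ?_⟩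
    · simp only [hU, Finset.coe_union, Set.mem_union, Finset.coe_image, Set.mem_image]
      exact Or.inl (Or.inr ⟨(x, y), hxy, rfl⟩)
    · simp only [hU, Finset.coe_union, Set.mem_union, Finset.coe_image, Set.mem_image]
      exact Or.inr ⟨(x, y), hxy, rfl⟩
  have hbU : b ∈ RS1 (↑U : Set S) := by
    refine Or.inl ?_
    simp [hU]
  rcases key ρ hcong hXρ with heq | ⟨h1, h2⟩
  · rw [heq]
    exact Or.inr ⟨b, by simp [hU], t, rfl⟩
  · exact h1
end

section
/- Let S be a semigroup with a regular element a, so that there exists b ∈ S with a = a*b*a. Then for any set U ⊆ S such that S = US¹, the right annihilator congruence r_S(a) is generated as a right congruence by {(b*a*u, u) : u ∈ U}. Consequently, r_S(a) is finitely generated as a right congruence if and only if S = US¹ for some finite set U ⊆ S. -/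
lemma mem_RS1_mul {S : Type*} [Semigroup S] {V : Set S} {c : S} (h : c ∈ RS1 V) (r : S) :
    c * r ∈ RS1 V := by
  rcases h with h | ⟨u, hu, s, rfl⟩
  · exact Or.inr ⟨c, h, r, rfl⟩
  · exact Or.inr ⟨u, hu, s * r, mul_assoc u s r⟩

lemma part1 {S : Type*} [Semigroup S] (a b : S) (hab : a = a * b * a)
    (U : Set S) (hU : RS1 U = Set.univ) :
    rAnn a = rcGen (fun x y => ∃ u ∈ U, x = b * a * u ∧ y = u) := by
  funext s t
  apply propext
  constructor
  · intro h ρ hρ hX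
    have key : ∀ c : S, ρ (b * a * c) c := by
      intro c
      have hc : c ∈ RS1 U := by rw [hU]; trivial
      rcases hc with hc | ⟨u, hu, r, rfl⟩
      · exact hX _ _ ⟨c, hc, rfl, rfl⟩
      · have h2 := hρ.2 _ _ r (hX _ _ ⟨u, hu, rfl, rfl⟩)
        rwa [← mul_assoc]
    have hst : b * a * s = b * a * t := by
      rw [mul_assoc, mul_assoc, h]
    exact hρ.1.trans (hρ.1.symm (key s)) (hst ▸ key t)
  · intro h
    refine h (rAnn a) ⟨⟨fun x => rfl, fun h => h.symm, fun h1 h2 => h1.trans h2⟩,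
      fun x y r hxy => ?_⟩ ?_
    · show a * (x * r) = a * (y * r)
      rw [← mul_assoc, ← mul_assoc, hxy]
    · rintro x y ⟨u, hu, rfl, rfl⟩
      simp only [rAnn]
      rw [← mul_assoc, ← mul_assoc, ← hab]

theorem stmt12 {S : Type*} [Semigroup S] (a b : S) (hab : a = a * b * a) :
    (∀ U : Set S, RS1 U = Set.univ →
      rAnn a = rcGen (fun x y => ∃ u ∈ U, x = b * a * u ∧ y = u)) ∧
    (FGRightCong (rAnn a) ↔ ∃ U : Finset S, RS1 (↑U : Set S) = Set.univ) := by
  refine ⟨part1 a b hab, ?_, ?_⟩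
  · rintro ⟨X, hX⟩
    classical
    refine ⟨insert (b * a) (X.image Prod.fst ∪ X.image Prod.snd), ?_⟩
    apply Set.eq_univ_of_forall
    intro s
    set U : Finset S := insert (b * a) (X.image Prod.fst ∪ X.image Prod.snd) with hUdef
    have hann : rAnn a (b * a * s) s := by
      show a * (b * a * s) = a * s
      rw [← mul_assoc, ← mul_assoc, ← hab]
    have hgen : rcGen (fun x y => (x, y) ∈ X) (b * a * s) s := by
      rw [← hX]; exact hann
    let ρ : S → S → Prop := fun x y => x = y ∨ (x ∈ RS1 (↑U : Set S) ∧ y ∈ RS1 (↑U : Set S))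
    have hcong : IsRightCong ρ := by
      refine ⟨⟨fun x => Or.inl rfl, ?_, ?_⟩, ?_⟩
      · rintro x y (rfl | ⟨h1, h2⟩)
        · exact Or.inl rfl
        · exact Or.inr ⟨h2, h1⟩
      · rintro x y z (rfl | ⟨h1, h2⟩) hyz
        · exact hyz
        · rcases hyz with rfl | ⟨h3, h4⟩
          · exact Or.inr ⟨h1, h2⟩
          · exact Or.inr ⟨h1, h4⟩
      · rintro x y r (rfl | ⟨h1, h2⟩)
        · exact Or.inl rfl
        · exact Or.inr ⟨mem_RS1_mul h1 r, mem_RS1_mul h2 r⟩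
    have hsub : ∀ x y, (x, y) ∈ X → ρ x y := by
      intro x y hxy
      refine Or.inr ⟨Or.inl ?_, Or.inl ?_⟩
      · simp only [hUdef, Finset.coe_insert, Finset.coe_union, Finset.coe_image,
          Set.mem_insert_iff, Set.mem_union, Set.mem_image]
        exact Or.inr (Or.inl ⟨(x, y), hxy, rfl⟩)
      · simp only [hUdef, Finset.coe_insert, Finset.coe_union, Finset.coe_image,
          Set.mem_insert_iff, Set.mem_union, Set.mem_image]
        exact Or.inr (Or.inr ⟨(x, y), hxy, rfl⟩)
    rcases hgen ρ hcong hsub with heq | ⟨_, hs⟩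
    · refine Or.inr ⟨b * a, ?_, s, heq.symm⟩
      simp [hUdef]
    · exact hs
  · rintro ⟨U, hU⟩
    classical
    refine ⟨U.image (fun u => (b * a * u, u)), ?_⟩
    rw [part1 a b hab (↑U) hU]
    have hP : (fun x y => ∃ u ∈ (↑U : Set S), x = b * a * u ∧ y = u)
        = (fun x y => (x, y) ∈ U.image (fun u => (b * a * u, u))) := by
      funext x y
      apply propext
      simp only [Finset.mem_image, Finset.mem_coe, Prod.mk.injEq]
      constructor
      · rintro ⟨u, hu, h1, h2⟩
        exact ⟨u, hu, h1.symm, h2.symm⟩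
      · rintro ⟨u, hu, h1, h2⟩
        exact ⟨u, hu, h1.symm, h2.symm⟩
    rw [hP]
end

section
/- A regular semigroup S (i.e., a semigroup in which every element a satisfies a = a*b*a for some b ∈ S) is finitely right equated if and only if S = US¹ for some finite set U ⊆ S. Consequently, every regular monoid is finitely right equated. -/
universe u

lemma rAnn_isRightCong {S : Type u} [Semigroup S] (a : S) : IsRightCong (rAnn a) := by
  refine ⟨⟨fun s => rfl, fun h => h.symm, fun h h' => h.trans h'⟩, ?_⟩
  intro x y s h
  show a * (x * s) = a * (y * s)
  rw [← mul_assoc, ← mul_assoc, h]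

lemma RS1_mul_mem {S : Type u} [Semigroup S] {V : Set S} {x : S} (hx : x ∈ RS1 V) (r : S) :
    x * r ∈ RS1 V := by
  rcases hx with hx | ⟨v, hv, s, rfl⟩
  · exact Or.inr ⟨x, hx, r, rfl⟩
  · exact Or.inr ⟨v, hv, s * r, (mul_assoc v s r)⟩

lemma main_semigroup (S : Type u) [Semigroup S] (hreg : ∀ a : S, ∃ b : S, a = a * b * a) :
    FRE S ↔ ∃ U : Finset S, RS1 (↑U : Set S) = Set.univ := by
  classical
  constructor
  · -- FRE → ∃ U
    intro hfre
    by_cases hne : Nonempty S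
    · obtain ⟨a⟩ := hne
      obtain ⟨b, hb⟩ := hreg a
      set e := b * a with he
      have hee : e * e = e := by
        rw [he, mul_assoc, ← mul_assoc a b a, ← hb]
      obtain ⟨X, hX⟩ := hfre e
      refine ⟨insert e (X.image Prod.fst ∪ X.image Prod.snd), ?_⟩
      set U : Finset S := insert e (X.image Prod.fst ∪ X.image Prod.snd) with hUdef
      set I : Set S := RS1 (↑U : Set S) with hI
      have hmemU : ∀ x ∈ U, x ∈ I := fun x hx => Or.inl (by exact_mod_cast hx)
      ext s
      simp only [Set.mem_univ, iff_true]
      -- the pair (e*s, s) lies in rAnn e, hence in rcGen X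
      have key : rAnn e (e * s) s := by
        show e * (e * s) = e * s
        rw [← mul_assoc, hee]
      rw [hX] at key
      -- apply rcGen to the right congruence ρ
      have hρ : IsRightCong (fun x y : S => x = y ∨ (x ∈ I ∧ y ∈ I)) := by
        constructor
        · constructor
          · intro x; exact Or.inl rfl
          · rintro x y (rfl | ⟨h1, h2⟩)
            · exact Or.inl rfl
            · exact Or.inr ⟨h2, h1⟩
          · rintro x y z (rfl | ⟨h1, h2⟩) h
            · exact h
            · rcases h with rfl | ⟨h3, h4⟩
              · exact Or.inr ⟨h1, h2⟩
              · exact Or.inr ⟨h1, h4⟩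
        · rintro x y r (rfl | ⟨h1, h2⟩)
          · exact Or.inl rfl
          · exact Or.inr ⟨RS1_mul_mem h1 r, RS1_mul_mem h2 r⟩
      have hgen : ∀ x y : S, (x, y) ∈ X → x = y ∨ (x ∈ I ∧ y ∈ I) := by
        intro x y hxy
        refine Or.inr ⟨hmemU x ?_, hmemU y ?_⟩
        · exact Finset.mem_insert_of_mem (Finset.mem_union_left _
            (Finset.mem_image.mpr ⟨(x, y), hxy, rfl⟩))
        · exact Finset.mem_insert_of_mem (Finset.mem_union_right _
            (Finset.mem_image.mpr ⟨(x, y), hxy, rfl⟩))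
      have heI : e ∈ I := hmemU e (Finset.mem_insert_self _ _)
      rcases key _ hρ hgen with heq | ⟨_, h2⟩
      · -- e * s = s, so s ∈ I as e ∈ U
        rw [← heq]
        exact Or.inr ⟨e, by exact_mod_cast Finset.mem_insert_self _ _, s, rfl⟩
      · exact h2
    · exact ⟨∅, by ext s; exact absurd ⟨s⟩ hne⟩
  · -- ∃ U → FRE
    rintro ⟨U, hU⟩ a
    obtain ⟨b, hb⟩ := hreg a
    refine ⟨U.image (fun u => (u, b * (a * u))), ?_⟩
    funext s t
    apply propext
    constructor
    · -- rAnn a s t → rcGen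
      intro hst ρ hρ hXρ
      have hgen : ∀ u ∈ U, ρ u (b * (a * u)) := by
        intro u hu
        exact hXρ u (b * (a * u)) (Finset.mem_image.mpr ⟨u, hu, rfl⟩)
      have hall : ∀ x : S, ρ x (b * (a * x)) := by
        intro x
        have hx : x ∈ RS1 (↑U : Set S) := by rw [hU]; trivial
        rcases hx with hx | ⟨u, hu, r, rfl⟩
        · exact hgen x hx
        · have h1 := hρ.2 _ _ r (hgen u hu)
          have : b * (a * u) * r = b * (a * (u * r)) := by
            rw [mul_assoc, mul_assoc]
          rwa [this] at h1
      have h1 := hall s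
      have h2 := hall t
      have : b * (a * s) = b * (a * t) := by rw [hst]
      rw [this] at h1
      exact hρ.1.trans h1 (hρ.1.symm h2)
    · -- rcGen → rAnn a
      intro h
      refine h (rAnn a) (rAnn_isRightCong a) ?_
      intro x y hxy
      rcases Finset.mem_image.mp hxy with ⟨u, hu, heq⟩
      obtain ⟨rfl, rfl⟩ : u = x ∧ b * (a * u) = y := by
        constructor <;> [exact congrArg Prod.fst heq; exact congrArg Prod.snd heq]
      show a * u = a * (b * (a * u))
      rw [← mul_assoc, ← mul_assoc, ← hb]

theorem stmt13 :
    (∀ (S : Type u) [Semigroup S], (∀ a : S, ∃ b : S, a = a * b * a) →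
      (FRE S ↔ ∃ U : Finset S, RS1 (↑U : Set S) = Set.univ)) ∧
    (∀ (M : Type u) [Monoid M], (∀ a : M, ∃ b : M, a = a * b * a) → FRE M) := by
  refine ⟨main_semigroup, ?_⟩
  intro M _ hreg
  rw [main_semigroup M hreg]
  refine ⟨{1}, ?_⟩
  ext x
  simp only [Set.mem_univ, iff_true]
  exact Or.inr ⟨1, by simp, x, (one_mul x).symm⟩
end

section
/- Let S and T be semigroups such that for each b ∈ T there exist a ∈ S and a semigroup homomorphism φ : S → T with φ(a) = b and φ(r_S(a)) = r_T(b), where φ applied to a relation X means {(φ(x), φ(y)) : (x,y) ∈ X}. If S is finitely right equated, then so is T. -/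
theorem stmt14 {S T : Type*} [Semigroup S] [Semigroup T]
    (h : ∀ b : T, ∃ (a : S) (φ : S →ₙ* T), φ a = b ∧
      (∀ t t' : T, rAnn b t t' ↔ ∃ s s' : S, rAnn a s s' ∧ φ s = t ∧ φ s' = t'))
    (hS : FRE S) : FRE T := by

  intro b
  obtain ⟨a, φ, hφa, hiff⟩ := h b
  obtain ⟨X, hX⟩ := hS a
  classical
  refine ⟨X.image (fun p => (φ p.1, φ p.2)), ?_⟩
  funext t t'
  apply propext
  constructor
  · intro htt ρ hρ hgen
    have haX : rAnn a = rcGen (fun a b => (a, b) ∈ X) := hX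
    obtain ⟨s, s', hss, hs, hs'⟩ := (hiff t t').mp htt
    have hss' : rcGen (fun a b => (a, b) ∈ X) s s' := haX ▸ hss
    -- pull back ρ along φ
    have := hss' (fun u v => ρ (φ u) (φ v)) ⟨⟨fun u => hρ.1.refl _,
      fun h => hρ.1.symm h, fun h1 h2 => hρ.1.trans h1 h2⟩,
      fun u v w huv => by
        have := hρ.2 (φ u) (φ v) (φ w) huv
        simpa [map_mul] using this⟩
      (fun u v huv => hgen (φ u) (φ v) (Finset.mem_image.mpr ⟨(u, v), huv, rfl⟩))
    rwa [hs, hs'] at this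
  · intro hgen
    refine hgen (rAnn b) ⟨⟨fun u => rfl, fun h => h.symm, fun h1 h2 => h1.trans h2⟩,
      fun u v w huv => by unfold rAnn at *; rw [← mul_assoc, ← mul_assoc, huv]⟩ ?_
    intro x y hxy
    obtain ⟨⟨u, v⟩, huv, heq⟩ := Finset.mem_image.mp hxy
    obtain ⟨h1, h2⟩ := Prod.mk.injEq .. ▸ heq
    have huv' : rAnn a u v := by
      rw [hX]; intro ρ hρ hg; exact hg u v huv
    exact h1 ▸ h2 ▸ (hiff (φ u) (φ v)).mpr ⟨u, v, huv', rfl, rfl⟩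
end

section
/- Let S be a semigroup and T a subsemigroup of S such that the complement S \ T is a two-sided ideal of S. If S is finitely right equated, then T is finitely right equated. -/
theorem stmt16 {S : Type*} [Semigroup S] (T : Subsemigroup S)
    (hne : ((↑T : Set S)ᶜ).Nonempty)
    (hl : ∀ s : S, ∀ a ∈ (↑T : Set S)ᶜ, s * a ∈ (↑T : Set S)ᶜ)
    (hr : ∀ a ∈ (↑T : Set S)ᶜ, ∀ s : S, a * s ∈ (↑T : Set S)ᶜ)
    (hS : FRE S) : FRE ↥T := by
  classical
  -- complement membership restated
  have hl' : ∀ s q : S, q ∉ T → s * q ∉ T := by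
    intro s q hq
    exact hl s q hq
  have hr' : ∀ q : S, q ∉ T → ∀ s : S, q * s ∉ T := by
    intro q hq s
    exact hr q hq s
  -- T is unitary: a product in T forces both factors in T
  have hunit : ∀ x y : S, x * y ∈ T → x ∈ T ∧ y ∈ T := by
    intro x y hxy
    constructor
    · by_contra hx
      exact hr' x hx y hxy
    · by_contra hy
      exact hl' x y hy hxy
  intro a
  obtain ⟨X, hX⟩ := hS (a : S)
  -- generators of the S-level annihilator congruence satisfy a*x = a*y
  have hXann : ∀ x y : S, (x, y) ∈ X → (a : S) * x = (a : S) * y := by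
    intro x y hxy
    have h1 : rcGen (fun u v => (u, v) ∈ X) x y := fun ρ _ hXρ => hXρ x y hxy
    have h2 : rAnn (a : S) x y := by rw [hX]; exact h1
    exact h2
  -- the finite set of generators lying in T × T
  set f : S × S → Option (↥T × ↥T) := fun p =>
    if h : p.1 ∈ T ∧ p.2 ∈ T then some (⟨p.1, h.1⟩, ⟨p.2, h.2⟩) else none with hf
  have hfinj : ∀ p p' (b : ↥T × ↥T), b ∈ f p → b ∈ f p' → p = p' := by
    intro p p' b hb hb'
    simp only [hf, Option.mem_def] at hb hb'
    split_ifs at hb hb' with h h'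
    · have h2 := Option.some.inj (hb.trans hb'.symm)
      have h3 := congrArg (fun z : ↥T × ↥T => ((z.1 : S), (z.2 : S))) h2
      simp only [Prod.mk.injEq] at h3
      exact Prod.ext h3.1 h3.2
  set X' : Finset (↥T × ↥T) := X.filterMap f hfinj with hX'
  refine ⟨X', ?_⟩
  funext s t
  apply propext
  constructor
  · -- rAnn a ≤ rcGen X'
    intro h
    intro ρ hρ hgen
    -- pass to S level
    have hS1 : (a : S) * (s : S) = (a : S) * (t : S) := by
      have := congrArg (Subtype.val) h
      simpa using this
    have hkey : rcGen (fun u v => (u, v) ∈ X) (s : S) (t : S) := by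
      rw [← hX]; exact hS1
    -- the pulled-back right congruence on S
    set ρ' : S → S → Prop := fun p q =>
      ((a : S) * p = (a : S) * q) ∧ ∀ hp : p ∈ T, ∀ hq : q ∈ T, ρ ⟨p, hp⟩ ⟨q, hq⟩
      with hρ'
    have hρ'cong : IsRightCong ρ' := by
      constructor
      · constructor
        · intro p
          exact ⟨rfl, fun hp hq => hρ.1.refl _⟩
        · rintro p q ⟨h1, h2⟩
          exact ⟨h1.symm, fun hq hp => hρ.1.symm (h2 hp hq)⟩
        · rintro p q r ⟨h1, h2⟩ ⟨h3, h4⟩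
          refine ⟨h1.trans h3, fun hp hr2 => ?_⟩
          have hq : q ∈ T := by
            by_contra hq'
            exact hl' (a : S) q hq' (h1 ▸ mul_mem a.2 hp)
          exact hρ.1.trans (h2 hp hq) (h4 hq hr2)
      · rintro p q u ⟨h1, h2⟩
        refine ⟨by rw [← mul_assoc, ← mul_assoc, h1], fun hpu hqu => ?_⟩
        obtain ⟨hp, hu⟩ := hunit p u hpu
        obtain ⟨hq, _⟩ := hunit q u hqu
        have := hρ.2 ⟨p, hp⟩ ⟨q, hq⟩ ⟨u, hu⟩ (h2 hp hq)
        exact this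
    have hρ'X : ∀ x y : S, (x, y) ∈ X → ρ' x y := by
      intro x y hxy
      refine ⟨hXann x y hxy, fun hx hy => ?_⟩
      apply hgen
      rw [hX', Finset.mem_filterMap]
      refine ⟨(x, y), hxy, ?_⟩
      simp only [hf]
      rw [dif_pos ⟨hx, hy⟩]
    have := (hkey ρ' hρ'cong hρ'X).2 s.2 t.2
    exact this
  · -- rcGen X' ≤ rAnn a
    intro h
    refine h (rAnn a) ⟨⟨fun _ => rfl, fun h1 => h1.symm, fun h1 h2 => h1.trans h2⟩,
      fun x y u h1 => ?_⟩ ?_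
    · show a * (x * u) = a * (y * u)
      rw [← mul_assoc, ← mul_assoc, h1]
    · intro p q hpq
      rw [hX', Finset.mem_filterMap] at hpq
      obtain ⟨⟨x, y⟩, hxy, hfx⟩ := hpq
      simp only [hf] at hfx
      split_ifs at hfx with hmem
      · cases hfx
        have := hXann x y hxy
        show a * ⟨x, hmem.1⟩ = a * ⟨y, hmem.2⟩
        exact Subtype.ext (by simpa using this)
end

section
/- Let {M_i : i ∈ I} be a family of monoids. The monoid free product (coproduct) of the family {M_i : i ∈ I} is finitely right equated if and only if each monoid M_i is finitely right equated. -/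
section General

variable {S T : Type*} [Monoid S] [Monoid T]

lemma rcGen_of {X : S → S → Prop} {x y : S} (h : X x y) : rcGen X x y :=
  fun _ _ hX => hX x y h

lemma isRightCong_rcGen (X : S → S → Prop) : IsRightCong (rcGen X) := by
  refine ⟨⟨fun a ρ hρ _ => hρ.1.refl a,
    fun h ρ hρ hX => hρ.1.symm (h ρ hρ hX),
    fun h1 h2 ρ hρ hX => hρ.1.trans (h1 ρ hρ hX) (h2 ρ hρ hX)⟩,
    fun a b s h ρ hρ hX => hρ.2 a b s (h ρ hρ hX)⟩

lemma rcGen_le {X : S → S → Prop} {ρ : S → S → Prop} (hρ : IsRightCong ρ)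
    (hX : ∀ x y, X x y → ρ x y) : ∀ a b, rcGen X a b → ρ a b :=
  fun _ _ h => h ρ hρ hX

lemma isRightCong_rAnn (a : S) : IsRightCong (rAnn a) :=
  ⟨⟨fun _ => rfl, fun h => h.symm, fun h1 h2 => h1.trans h2⟩,
    fun x y s h => show _ * (x * s) = _ * (y * s) by
      rw [← mul_assoc, ← mul_assoc]; exact congrArg (· * s) h⟩

/-- transport `rcGen` along a monoid hom. -/
lemma rcGen_map (f : S →* T) {X : S → S → Prop} {Y : T → T → Prop}
    (hmap : ∀ x y, X x y → Y (f x) (f y)) {x y : S} (h : rcGen X x y) :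
    rcGen Y (f x) (f y) := by
  intro ρ hρ hY
  refine h (fun a b => ρ (f a) (f b)) ⟨⟨fun a => hρ.1.refl _, fun h => hρ.1.symm h,
    fun h1 h2 => hρ.1.trans h1 h2⟩, fun a b s hab => by
      simpa only [map_mul] using hρ.2 (f a) (f b) (f s) hab⟩
    (fun a b hab => hY _ _ (hmap a b hab))

/-- transport `rcGen` along left translation. -/
lemma rcGen_translate (c : S) {X : S → S → Prop} {Y : S → S → Prop}
    (hmap : ∀ x y, X x y → Y (c * x) (c * y)) {x y : S} (h : rcGen X x y) :
    rcGen Y (c * x) (c * y) := by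
  intro ρ hρ hY
  refine h (fun a b => ρ (c * a) (c * b)) ⟨⟨fun a => hρ.1.refl _, fun h => hρ.1.symm h,
    fun h1 h2 => hρ.1.trans h1 h2⟩, fun a b s hab => by
      simpa only [mul_assoc] using hρ.2 (c * a) (c * b) s hab⟩
    (fun a b hab => hY _ _ (hmap a b hab))

lemma fg_rAnn_one : FGRightCong (rAnn (1 : S)) := by
  classical
  refine ⟨∅, ?_⟩
  funext s t
  refine propext ⟨fun h => ?_, fun h => ?_⟩
  · intro ρ hρ _
    have : s = t := by simpa [rAnn] using h
    exact this ▸ hρ.1.refl s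
  · have := h Eq ⟨eq_equivalence, fun a b s h => by rw [h]⟩ (by simp)
    simp [rAnn, this]

/-- The key "right invertible letter" step, valid in any monoid. -/
lemma fg_rAnn_mul_of_rightInv {b c cinv : S} (hc : c * cinv = 1)
    (hb : FGRightCong (rAnn b)) : FGRightCong (rAnn (b * c)) := by
  classical
  obtain ⟨X, hX⟩ := hb
  refine ⟨insert ((1 : S), cinv * c) (X.image fun p => (cinv * p.1, cinv * p.2)), ?_⟩
  set Y : S → S → Prop := fun a b' =>
    (a, b') ∈ insert ((1 : S), cinv * c) (X.image fun p => (cinv * p.1, cinv * p.2)) with hY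
  funext s t
  refine propext ⟨fun h => ?_, fun h => ?_⟩
  · -- b * c * s = b * c * t
    have h1 : rAnn b (c * s) (c * t) := by
      simpa only [rAnn, mul_assoc] using h
    rw [hX] at h1
    have h2 : rcGen Y (cinv * (c * s)) (cinv * (c * t)) := by
      refine rcGen_translate cinv (fun x y hxy => ?_) h1
      simp only [hY, Finset.mem_insert, Finset.mem_image]
      exact Or.inr ⟨(x, y), hxy, rfl⟩
    have hgen : ∀ u : S, rcGen Y u (cinv * (c * u)) := by
      intro u
      have h0 : rcGen Y 1 (cinv * c) := rcGen_of (by simp [hY])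
      have := (isRightCong_rcGen Y).2 _ _ u h0
      simpa only [one_mul, mul_assoc] using this
    exact (isRightCong_rcGen Y).1.trans (hgen s)
      ((isRightCong_rcGen Y).1.trans h2 ((isRightCong_rcGen Y).1.symm (hgen t)))
  · refine rcGen_le (isRightCong_rAnn (b * c)) (fun x y hxy => ?_) s t h
    simp only [hY, Finset.mem_insert, Finset.mem_image, Prod.mk.injEq] at hxy
    rcases hxy with ⟨rfl, rfl⟩ | ⟨⟨p, q⟩, hpq, rfl, rfl⟩
    · show b * c * 1 = b * c * (cinv * c)
      rw [mul_one, mul_assoc b c _, ← mul_assoc c cinv c, hc, one_mul]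
    · have : rAnn b p q := by
        rw [hX]; exact rcGen_of hpq
      show b * c * (cinv * p) = b * c * (cinv * q)
      have hb1 : b * c * cinv = b := by rw [mul_assoc, hc, mul_one]
      rw [← mul_assoc, hb1, ← mul_assoc, hb1]
      exact this

/-- FRE passes to retracts. -/
lemma FRE_of_retract (f : S →* T) (g : T →* S) (hg : ∀ s, g (f s) = s)
    (h : FRE T) : FRE S := by
  classical
  intro a
  obtain ⟨X, hX⟩ := h (f a)
  refine ⟨X.image fun p => (g p.1, g p.2), ?_⟩
  set Y : S → S → Prop := fun u v => (u, v) ∈ X.image fun p => (g p.1, g p.2) with hY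
  funext s t
  refine propext ⟨fun hst => ?_, fun hst => ?_⟩
  · have h1 : rAnn (f a) (f s) (f t) := by
      show f a * f s = f a * f t
      rw [← map_mul, ← map_mul, hst]
    rw [hX] at h1
    have h2 : rcGen Y (g (f s)) (g (f t)) := by
      refine rcGen_map g (fun x y hxy => ?_) h1
      simp only [hY, Finset.mem_image]
      exact ⟨(x, y), hxy, rfl⟩
    rwa [hg, hg] at h2
  · refine rcGen_le (isRightCong_rAnn a) (fun x y hxy => ?_) s t hst
    simp only [hY, Finset.mem_image, Prod.mk.injEq] at hxy
    obtain ⟨⟨p, q⟩, hpq, rfl, rfl⟩ := hxy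
    have : rAnn (f a) p q := by rw [hX]; exact rcGen_of hpq
    have := congrArg g this
    simpa only [map_mul, hg, rAnn] using this

end General

namespace Monoid.CoprodI
variable {ι : Type*} {M : ι → Type*} [∀ i, Monoid (M i)] [DecidableEq ι] [∀ i, DecidableEq (M i)]

lemma equiv_prod (w : Word M) : Word.equiv (w.prod) = w :=
  Word.equiv.apply_symm_apply w

lemma prod_equiv (a : CoprodI M) : (Word.equiv a).prod = a :=
  Word.equiv.symm_apply_apply a

lemma key (i : ι) (x : M i) (hx : x ≠ 1) (t : Word M) (ht : t.fstIdx ≠ some i) :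
    ∀ w : Word M, (∀ l ∈ w.toList.getLast?, Sigma.fst l ≠ i) →
      (Word.equiv (w.prod * (of x * t.prod))).toList = w.toList ++ ⟨i, x⟩ :: t.toList := by
  intro w
  induction w using Word.consRecOn with
  | empty =>
    intro _
    have h1 : of x * t.prod = (Word.cons x t ht hx).prod := (Word.prod_cons i x t hx ht).symm
    rw [Word.prod_empty, one_mul, h1, equiv_prod]
    rfl
  | cons j m w' h1 h2 ih =>
    intro hlast
    have hw'last : ∀ l ∈ w'.toList.getLast?, Sigma.fst l ≠ i := by
      intro l hl
      apply hlast
      rcases hL : w'.toList with _ | ⟨hd, tl⟩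
      · rw [hL] at hl; simp at hl
      · rw [Word.cons_toList, hL, List.getLast?_cons_cons]
        rw [hL] at hl; exact hl
    have hW' := ih hw'last
    set W' := Word.equiv (w'.prod * (of x * t.prod)) with hW'def
    have hfst : W'.fstIdx ≠ some j := by
      rw [Word.fstIdx, hW']
      rcases hL : w'.toList with _ | ⟨hd, tl⟩
      · simp only [hL, List.nil_append, List.head?_cons, Option.map_some]
        have : j ≠ i := by
          apply hlast ⟨j, m⟩
          rw [Word.cons_toList, hL]
          simp
        simp [Ne.symm this]
      · simp only [hL, List.cons_append, List.head?_cons, Option.map_some]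
        have := h1
        rw [Word.fstIdx, hL] at this
        simpa using this
    have hprod : (Word.cons m w' h1 h2).prod * (of x * t.prod)
        = (Word.cons m W' hfst h2).prod := by
      rw [Word.prod_cons, Word.prod_cons, mul_assoc, hW'def, prod_equiv]
    rw [hprod, equiv_prod, Word.cons_toList, Word.cons_toList, hW']
    rfl

lemma decomp (i : ι) (s : CoprodI M) :
    s = of (Word.equivPair i (Word.equiv s)).head *
      (Word.equivPair i (Word.equiv s)).tail.prod := by
  conv_lhs => rw [← prod_equiv s, ← (Word.equivPair i).symm_apply_apply (Word.equiv s)]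
  rw [Word.equivPair_symm, Word.prod_rcons]

lemma decomp_unique (i : ι) (u : M i) (tl : Word M) (h : tl.fstIdx ≠ some i) :
    Word.equivPair i (Word.equiv (of u * tl.prod)) = ⟨u, tl, h⟩ := by
  have h2 : of u * tl.prod = (Word.rcons ⟨u, tl, h⟩).prod := (Word.prod_rcons (M := M) ⟨u, tl, h⟩).symm
  rw [h2, equiv_prod, ← Word.equivPair_symm, Equiv.apply_symm_apply]


lemma fg_rAnn_coprodI (hM : ∀ i, FRE (M i)) :
    ∀ (n : ℕ) (a : CoprodI M), (Word.equiv a).toList.length ≤ n → FGRightCong (rAnn a) := by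
  have hbase : ∀ a : CoprodI M, (Word.equiv a).toList = [] → FGRightCong (rAnn a) := by
    intro a h0
    have hempty : Word.equiv a = Word.empty := Word.ext h0
    have h1 : a = 1 := by
      rw [← prod_equiv a, hempty, Word.prod_empty]
    rw [h1]; exact fg_rAnn_one
  intro n
  induction n with
  | zero =>
    intro a ha
    exact hbase a (List.eq_nil_of_length_eq_zero (Nat.le_zero.mp ha))
  | succ n ih =>
    intro a ha
    rcases List.eq_nil_or_concat' ((Word.equiv a).toList) with h0 | ⟨L, ⟨i, g⟩, hL⟩
    · exact hbase a h0
    · have hchain := (Word.equiv a).chain_ne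
      rw [hL] at hchain
      obtain ⟨hcL, -, hlast⟩ := List.isChain_append.mp hchain
      have hlastL : ∀ l ∈ L.getLast?, Sigma.fst l ≠ i := by
        intro l hl
        exact hlast l hl ⟨i, g⟩ (by simp)
      have hne : ∀ l ∈ L, Sigma.snd l ≠ 1 := fun l hl =>
        (Word.equiv a).ne_one l (by rw [hL]; exact List.mem_append_left _ hl)
      set wL : Word M := ⟨L, hne, hcL⟩ with hwL
      have hg1 : g ≠ 1 :=
        (Word.equiv a).ne_one ⟨i, g⟩ (by rw [hL]; exact List.mem_append_right _ (by simp))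
      have ha'' : a = wL.prod * of g := by
        conv_lhs => rw [← prod_equiv a]
        show ((Word.equiv a).toList.map fun l => of l.snd).prod = _
        rw [hL, List.map_append, List.prod_append]
        show _ = (wL.toList.map fun l => of l.snd).prod * _
        simp [hwL]
      have hlen : L.length ≤ n := by
        have := ha
        rw [hL, List.length_append] at this
        simpa using this
      by_cases hinv : ∃ u : M i, g * u = 1
      · obtain ⟨u, hu⟩ := hinv
        have h1 : (of g : CoprodI M) * of u = 1 := by
          rw [← MonoidHom.map_mul, hu, MonoidHom.map_one]
        have hIH : FGRightCong (rAnn wL.prod) := ih wL.prod (by rw [equiv_prod]; exact hlen)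
        rw [ha'']
        exact fg_rAnn_mul_of_rightInv h1 hIH
      · push_neg at hinv
        obtain ⟨Y, hY⟩ := hM i g
        refine ⟨Y.image fun p => ((of p.1 : CoprodI M), (of p.2 : CoprodI M)), ?_⟩
        set XP : CoprodI M → CoprodI M → Prop := fun a b =>
          (a, b) ∈ Y.image fun p => ((of p.1 : CoprodI M), (of p.2 : CoprodI M)) with hXP
        funext s t
        refine propext ⟨fun hst => ?_, fun hst => ?_⟩
        · -- hst : a * s = a * t
          set u := (Word.equivPair i (Word.equiv s)).head with hu
          set ws := (Word.equivPair i (Word.equiv s)).tail with hws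
          set v := (Word.equivPair i (Word.equiv t)).head with hv
          set wt := (Word.equivPair i (Word.equiv t)).tail with hwt
          have hs : s = of u * ws.prod := decomp i s
          have htt : t = of v * wt.prod := decomp i t
          have hkey_s : (Word.equiv (a * s)).toList = L ++ ⟨i, g * u⟩ :: ws.toList := by
            have he : a * s = wL.prod * (of (g * u) * ws.prod) := by
              rw [ha'', hs, MonoidHom.map_mul, mul_assoc, mul_assoc]
            rw [he]
            exact key i (g * u) (hinv u) ws
              (Word.equivPair i (Word.equiv s)).fstIdx_ne wL hlastL
          have hkey_t : (Word.equiv (a * t)).toList = L ++ ⟨i, g * v⟩ :: wt.toList := by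
            have he : a * t = wL.prod * (of (g * v) * wt.prod) := by
              rw [ha'', htt, MonoidHom.map_mul, mul_assoc, mul_assoc]
            rw [he]
            exact key i (g * v) (hinv v) wt
              (Word.equivPair i (Word.equiv t)).fstIdx_ne wL hlastL
          have hlists : L ++ ⟨i, g * u⟩ :: ws.toList = L ++ ⟨i, g * v⟩ :: wt.toList := by
            rw [← hkey_s, ← hkey_t, hst]
          have h2 := List.append_cancel_left hlists
          rw [List.cons.injEq] at h2
          have hguv : g * u = g * v := by
            have hg' := h2.1
            simpa using hg'
          have hwswt : ws = wt := Word.ext h2.2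
          have hr : rcGen (fun p q => (p, q) ∈ Y) u v := by
            have : rAnn g u v := hguv
            rwa [hY] at this
          have h3 : rcGen XP (of u) (of v) := by
            refine rcGen_map (of : M i →* CoprodI M) (fun p q hpq => ?_) hr
            simp only [hXP, Finset.mem_image]
            exact ⟨(p, q), hpq, rfl⟩
          have h4 := (isRightCong_rcGen XP).2 _ _ ws.prod h3
          rw [← hs] at h4
          rw [htt, ← hwswt]
          exact h4
        · refine rcGen_le (isRightCong_rAnn a) (fun x y hxy => ?_) s t hst
          simp only [hXP, Finset.mem_image, Prod.mk.injEq] at hxy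
          obtain ⟨⟨p, q⟩, hpq, rfl, rfl⟩ := hxy
          have hgpq : g * p = g * q := by
            have : rAnn g p q := by rw [hY]; exact rcGen_of hpq
            exact this
          show a * of p = a * of q
          rw [ha'', mul_assoc, mul_assoc, ← MonoidHom.map_mul, ← MonoidHom.map_mul, hgpq]

end Monoid.CoprodI

theorem stmt19 {ι : Type*} (M : ι → Type*) [∀ i, Monoid (M i)] :
    FRE (Monoid.CoprodI M) ↔ ∀ i, FRE (M i) := by
  letI : DecidableEq ι := Classical.decEq ι
  letI : ∀ i, DecidableEq (M i) := fun i => Classical.decEq (M i)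
  constructor
  · intro h i
    refine FRE_of_retract (Monoid.CoprodI.of : M i →* Monoid.CoprodI M)
      (Monoid.CoprodI.lift (Pi.mulSingle i (MonoidHom.id (M i)))) (fun x => ?_) h
    rw [Monoid.CoprodI.lift_of, Pi.mulSingle_eq_same]
    rfl
  · intro h a
    exact Monoid.CoprodI.fg_rAnn_coprodI h (Monoid.CoprodI.Word.equiv a).toList.length a le_rfl
end
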